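/- Bound on extracted work under invariant weight entropy (Lemma 5): Let H_W and H_S be Hermitian matrices on ℂ^{d_W} and ℂ^{d_S}, kT > 0, and let U be a unitary on ℂ^{d_W} ⊗ ℂ^{d_S} with [U, H_W ⊗ 1 + 1 ⊗ H_S] = 0. Let ρ_W be a density matrix on ℂ^{d_W} and φ̃ ∈ ℂ^{d_S} a unit vector; set σ := U(ρ_W ⊗ |φ̃⟩⟨φ̃|)U† and ρ'_W := tr₂ σ (the partial trace over the system factor). Define the extracted work W := F_{H_W}(ρ'_W) − F_{H_W}(ρ_W). If S(ρ'_W) = S(ρ_W), then W ≤ ⟨φ̃, H_S φ̃⟩ − λ_min(H_S), where λ_min(H_S) is the least eigenvalue of H_S. -/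

import Mathlib

open Matrix
open scoped Kronecker Matrix ComplexOrder

noncomputable section

/-- A density matrix: positive semidefinite with unit trace. -/
def IsDensityMatrix {n : Type*} [Fintype n] (ρ : Matrix n n ℂ) : Prop :=
  ρ.PosSemidef ∧ ρ.trace = 1

/-- von Neumann entropy `S(ρ) = -∑ λᵢ log λᵢ` (junk value 0 if not Hermitian). -/
noncomputable def vnEntropy {n : Type*} [Fintype n] [DecidableEq n]
    (ρ : Matrix n n ℂ) : ℝ :=
  if h : ρ.IsHermitian then -∑ i, (h.eigenvalues i) * Real.log (h.eigenvalues i) else 0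

/-- Non-equilibrium free energy `F(ρ) = tr(Hρ) - kT S(ρ)`. -/
noncomputable def freeEnergy {n : Type*} [Fintype n] [DecidableEq n]
    (kT : ℝ) (H ρ : Matrix n n ℂ) : ℝ :=
  (Matrix.trace (H * ρ)).re - kT * vnEntropy ρ

/-- Least eigenvalue of a Hermitian matrix (junk value 0 if not Hermitian). -/
noncomputable def lambdaMin {n : Type*} [Fintype n] [DecidableEq n]
    (H : Matrix n n ℂ) : ℝ :=
  if h : H.IsHermitian then ⨅ i, h.eigenvalues i else 0

/-- Partial trace over the second tensor factor. -/
def ptrace2 {m n : Type*} [Fintype n]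
    (σ : Matrix (m × n) (m × n) ℂ) : Matrix m m ℂ :=
  fun i j => ∑ k, σ (i, k) (j, k)

/-- Partial trace over the first tensor factor. -/
def ptrace1 {m n : Type*} [Fintype m]
    (σ : Matrix (m × n) (m × n) ℂ) : Matrix n n ℂ :=
  fun k l => ∑ i, σ (i, k) (i, l)

/-- Outer product `|v⟩⟨v|`. -/
def outer {n : Type*} (v : n → ℂ) : Matrix n n ℂ :=
  Matrix.vecMulVec v (star v)

/-- Kronecker product of vectors. -/
def kronVec {m n : Type*} (v : m → ℂ) (w : n → ℂ) : m × n → ℂ :=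
  fun p => v p.1 * w p.2

section Aux

set_option linter.unusedSectionVars false

variable {m n : Type*} [Fintype m] [Fintype n] [DecidableEq m] [DecidableEq n]

lemma conjT_kron (A : Matrix m m ℂ) (B : Matrix n n ℂ) : (A ⊗ₖ B)ᴴ = Aᴴ ⊗ₖ Bᴴ := by
  ext ⟨i, k⟩ ⟨j, l⟩
  simp [conjTranspose_apply, mul_comm]

lemma kron_posSemidef {A : Matrix m m ℂ} {B : Matrix n n ℂ}
    (hA : A.PosSemidef) (hB : B.PosSemidef) : (A ⊗ₖ B).PosSemidef := by
  exact hA.kronecker hB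

lemma outer_posSemidef (v : n → ℂ) : (outer v).PosSemidef := by
  constructor
  · ext i j
    simp [outer, vecMulVec, conjTranspose_apply, mul_comm]
  · exact (posSemidef_vecMulVec_self_star v).2

lemma trace_outer (v : n → ℂ) : (outer v).trace = star v ⬝ᵥ v := by
  simp [outer, vecMulVec, trace, diag, dotProduct, mul_comm]

lemma trace_mul_outer (H : Matrix n n ℂ) (v : n → ℂ) :
    (H * outer v).trace = star v ⬝ᵥ H.mulVec v := by
  simp only [trace, diag, mul_apply, outer, vecMulVec_apply, dotProduct, mulVec,
    Finset.mul_sum]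
  exact Finset.sum_congr rfl fun i _ => Finset.sum_congr rfl fun j _ => by ring

lemma trace_ptrace1 (σ : Matrix (m × n) (m × n) ℂ) : (ptrace1 σ).trace = σ.trace := by
  simp only [trace, diag, ptrace1, Fintype.sum_prod_type]
  exact Finset.sum_comm

lemma trace_ptrace2 (σ : Matrix (m × n) (m × n) ℂ) : (ptrace2 σ).trace = σ.trace := by
  simp only [trace, diag, ptrace2, Fintype.sum_prod_type]

lemma ptrace1_posSemidef {σ : Matrix (m × n) (m × n) ℂ} (h : σ.PosSemidef) :
    (ptrace1 σ).PosSemidef := by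
  have key : ptrace1 σ = ∑ i : m,
      (Matrix.of fun p k => if p = (i, k) then (1:ℂ) else 0 : Matrix (m × n) n ℂ)ᴴ * σ *
        (Matrix.of fun p k => if p = (i, k) then (1:ℂ) else 0 : Matrix (m × n) n ℂ) := by
    ext k l
    rw [Matrix.sum_apply]
    simp only [mul_apply, conjTranspose_apply, of_apply, apply_ite (star : ℂ → ℂ),
      star_one, star_zero, ite_mul, one_mul, zero_mul, mul_ite, mul_one, mul_zero,
      Finset.sum_ite_eq', Finset.mem_univ, if_true, ptrace1]
  rw [key]
  exact Finset.sum_induction _ Matrix.PosSemidef (fun a b ha hb => ha.add hb)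
    PosSemidef.zero (fun i _ => h.conjTranspose_mul_mul_same _)

lemma ptrace2_kron_one_mul (A : Matrix m m ℂ) (σ : Matrix (m × n) (m × n) ℂ) :
    ptrace2 ((A ⊗ₖ (1 : Matrix n n ℂ)) * σ) = A * ptrace2 σ := by
  ext i j
  simp only [ptrace2, mul_apply, Fintype.sum_prod_type, kroneckerMap_apply, one_apply,
    mul_ite, mul_one, mul_zero, ite_mul, zero_mul, Finset.mul_sum]
  rw [Finset.sum_comm]
  refine Finset.sum_congr rfl fun a _ => ?_
  rw [Finset.sum_comm]
  refine Finset.sum_congr rfl fun k _ => ?_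
  simp

lemma ptrace1_one_kron_mul (B : Matrix n n ℂ) (σ : Matrix (m × n) (m × n) ℂ) :
    ptrace1 (((1 : Matrix m m ℂ) ⊗ₖ B) * σ) = B * ptrace1 σ := by
  ext k l
  simp only [ptrace1, mul_apply, Fintype.sum_prod_type, kroneckerMap_apply, one_apply,
    mul_ite, mul_one, mul_zero, ite_mul, zero_mul, Finset.mul_sum,
    Finset.sum_ite_eq', Finset.sum_ite_eq, Finset.mem_univ, if_true]
  simp only [Finset.sum_ite_irrel, Finset.sum_const_zero, Finset.sum_ite_eq,
    Finset.mem_univ, if_true, one_mul]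
  exact Finset.sum_comm

lemma lambdaMin_le_trace [Nonempty n] {H τ : Matrix n n ℂ} (hH : H.IsHermitian)
    (hτ : τ.PosSemidef) (hτ1 : τ.trace = 1) :
    lambdaMin H ≤ (Matrix.trace (H * τ)).re := by
  classical
  set V : Matrix n n ℂ := (hH.eigenvectorUnitary : Matrix n n ℂ) with hV
  have hVmem : V ∈ Matrix.unitaryGroup n ℂ := hH.eigenvectorUnitary.2
  have hVV : V * Vᴴ = 1 := by
    simpa [Matrix.star_eq_conjTranspose] using (Matrix.mem_unitaryGroup_iff.mp hVmem)
  set τ' : Matrix n n ℂ := Vᴴ * τ * V with hτ'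
  have hτ'psd : τ'.PosSemidef := hτ.conjTranspose_mul_mul_same V
  have hτ'tr : τ'.trace = 1 := by
    rw [hτ', Matrix.trace_mul_cycle, hVV, Matrix.one_mul, hτ1]
  have hdiag : ∀ i, 0 ≤ τ' i i := by
    intro i
    exact hτ'psd.diag_nonneg
  have hkey : Matrix.trace (H * τ)
      = ∑ i, (hH.eigenvalues i : ℂ) * τ' i i := by
    conv_lhs => rw [hH.spectral_theorem, Unitary.conjStarAlgAut_apply]
    rw [show (V * Matrix.diagonal (RCLike.ofReal ∘ hH.eigenvalues) * star V) * τ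
        = V * (Matrix.diagonal (RCLike.ofReal ∘ hH.eigenvalues) * (star V * τ)) from by
      simp [Matrix.mul_assoc]]
    rw [Matrix.trace_mul_comm, Matrix.mul_assoc, Matrix.star_eq_conjTranspose, ← hτ']
    simp [Matrix.trace, Matrix.diag, Matrix.mul_apply, Matrix.diagonal]
  have hre : (Matrix.trace (H * τ)).re = ∑ i, hH.eigenvalues i * (τ' i i).re := by
    rw [hkey, Complex.re_sum]
    exact Finset.sum_congr rfl fun i _ => by simp [Complex.mul_re,
      (Complex.le_def.mp (hdiag i)).2.symm]
  have hrnn : ∀ i, 0 ≤ (τ' i i).re := fun i => (Complex.le_def.mp (hdiag i)).1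
  have hrsum : ∑ i, (τ' i i).re = 1 := by
    have := congrArg Complex.re hτ'tr
    simpa [Matrix.trace, Matrix.diag, Complex.re_sum] using this
  have hmin : ∀ i, lambdaMin H ≤ hH.eigenvalues i := fun i => by
    rw [lambdaMin, dif_pos hH]
    exact ciInf_le (Finite.bddBelow_range _) i
  calc lambdaMin H = lambdaMin H * ∑ i, (τ' i i).re := by rw [hrsum, mul_one]
    _ = ∑ i, lambdaMin H * (τ' i i).re := by rw [Finset.mul_sum]
    _ ≤ ∑ i, hH.eigenvalues i * (τ' i i).re :=
        Finset.sum_le_sum fun i _ => mul_le_mul_of_nonneg_right (hmin i) (hrnn i)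
    _ = (Matrix.trace (H * τ)).re := hre.symm

end Aux

/-- Lemma 5: under energy-conserving feedback that leaves the weight's entropy
invariant, the extracted work is bounded by the energy of the post-measurement
state above the ground-state energy of the system. -/
theorem work_bound_invariant_weight_entropy
    {dW dS : ℕ}
    (HW : Matrix (Fin dW) (Fin dW) ℂ) (HS : Matrix (Fin dS) (Fin dS) ℂ)
    (hHW : HW.IsHermitian) (hHS : HS.IsHermitian)
    (kT : ℝ) (hkT : 0 < kT)
    (U : Matrix (Fin dW × Fin dS) (Fin dW × Fin dS) ℂ)
    (hU : U ∈ Matrix.unitaryGroup (Fin dW × Fin dS) ℂ)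
    (hUcomm : U * (HW ⊗ₖ (1 : Matrix (Fin dS) (Fin dS) ℂ)
        + (1 : Matrix (Fin dW) (Fin dW) ℂ) ⊗ₖ HS)
      = (HW ⊗ₖ (1 : Matrix (Fin dS) (Fin dS) ℂ)
        + (1 : Matrix (Fin dW) (Fin dW) ℂ) ⊗ₖ HS) * U)
    (ρW : Matrix (Fin dW) (Fin dW) ℂ) (hρW : IsDensityMatrix ρW)
    (φt : Fin dS → ℂ) (hφt : star φt ⬝ᵥ φt = 1)
    (hS : vnEntropy (ptrace2 (U * (ρW ⊗ₖ outer φt) * Uᴴ)) = vnEntropy ρW) :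
    freeEnergy kT HW (ptrace2 (U * (ρW ⊗ₖ outer φt) * Uᴴ)) - freeEnergy kT HW ρW
      ≤ (star φt ⬝ᵥ HS.mulVec φt).re - lambdaMin HS := by
  classical
  have hne : Nonempty (Fin dS) := by
    rcases Nat.eq_zero_or_pos dS with h0 | h0
    · subst h0
      simp [dotProduct] at hφt
    · exact ⟨⟨0, h0⟩⟩
  set M : Matrix (Fin dW × Fin dS) (Fin dW × Fin dS) ℂ := ρW ⊗ₖ outer φt with hM
  set σ : Matrix (Fin dW × Fin dS) (Fin dW × Fin dS) ℂ := U * M * Uᴴ with hσ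
  set Htot := HW ⊗ₖ (1 : Matrix (Fin dS) (Fin dS) ℂ)
      + (1 : Matrix (Fin dW) (Fin dW) ℂ) ⊗ₖ HS with hHtot
  have hUU : Uᴴ * U = 1 := by
    simpa [Matrix.star_eq_conjTranspose] using (Unitary.star_mul_self_of_mem hU)
  -- positive semidefiniteness and traces
  have hMpsd : M.PosSemidef := kron_posSemidef hρW.1 (outer_posSemidef φt)
  have hσpsd : σ.PosSemidef := hMpsd.mul_mul_conjTranspose_same U
  have hMtr : M.trace = 1 := by
    rw [hM, trace_kronecker, hρW.2, trace_outer, hφt, one_mul]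
  have hσtr : σ.trace = 1 := by
    rw [hσ, Matrix.trace_mul_cycle, hUU, Matrix.one_mul, hMtr]
  -- energy conservation
  have hconj : Htot * σ = U * (Htot * M) * Uᴴ := by
    rw [hσ, ← Matrix.mul_assoc, ← Matrix.mul_assoc, ← hUcomm, Matrix.mul_assoc U Htot M]
  have hcons : (Htot * σ).trace = (Htot * M).trace := by
    rw [hconj, Matrix.trace_mul_cycle, hUU, Matrix.one_mul]
  -- decompose both sides
  have hσside : (Htot * σ).trace
      = (HW * ptrace2 σ).trace + (HS * ptrace1 σ).trace := by
    rw [hHtot, Matrix.add_mul, Matrix.trace_add, ← ptrace2_kron_one_mul HW σ,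
      ← ptrace1_one_kron_mul HS σ, trace_ptrace2, trace_ptrace1]
  have hMside : (Htot * M).trace
      = (HW * ρW).trace + star φt ⬝ᵥ HS.mulVec φt := by
    rw [hHtot, hM, Matrix.add_mul, Matrix.trace_add, ← mul_kronecker_mul,
      ← mul_kronecker_mul, trace_kronecker, trace_kronecker, Matrix.one_mul,
      Matrix.one_mul, trace_outer, hφt, mul_one, hρW.2, one_mul, trace_mul_outer]
  have hkey : (HW * ptrace2 σ).trace + (HS * ptrace1 σ).trace
      = (HW * ρW).trace + star φt ⬝ᵥ HS.mulVec φt := by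
    rw [← hσside, ← hMside, hcons]
  -- the reduced system state is a density matrix
  have hτpsd : (ptrace1 σ).PosSemidef := ptrace1_posSemidef hσpsd
  have hτtr : (ptrace1 σ).trace = 1 := by rw [trace_ptrace1, hσtr]
  have hbound : lambdaMin HS ≤ ((HS * ptrace1 σ).trace).re :=
    lambdaMin_le_trace hHS hτpsd hτtr
  -- conclude
  have hre : ((HW * ptrace2 σ).trace).re + ((HS * ptrace1 σ).trace).re
      = ((HW * ρW).trace).re + (star φt ⬝ᵥ HS.mulVec φt).re := by
    have := congrArg Complex.re hkey
    simpa using this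
  have hF : freeEnergy kT HW (ptrace2 σ) - freeEnergy kT HW ρW
      = ((HW * ptrace2 σ).trace).re - ((HW * ρW).trace).re := by
    simp only [freeEnergy]
    rw [hS]
    ring
  rw [hF]
  linarith [hbound, hre]

end
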